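/- arXiv:1606.08240 — 5 statements merged into one kernel-verified Lean document; each statement's English description precedes it below -/
import Mathlib

section
/- Let μ be a finite Borel measure on the unit sphere S^{n-1} with finite support {u_1, ..., u_m}. Then μ is uniquely determined among all finite Borel measures on S^{n-1} by its moments up to order m; that is, if ν is a finite Borel measure on S^{n-1} whose moments up to order m coincide with those of μ, then ν = μ. -/
open MeasureTheory Metric Real Filter
open scoped InnerProductSpace ENNReal NNReal Topology

noncomputable section

/-- `ℝ^n` as a Euclidean space. -/
abbrev En (n : ℕ) := EuclideanSpace ℝ (Fin n)

/-- The unit sphere `S^{n-1}` in `ℝ^n`. -/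
abbrev Sph (n : ℕ) : Set (En n) := Metric.sphere 0 1

/-- The moment of a Borel measure on the sphere corresponding to the
multi-index `i : Fin n → ℕ`, i.e. `∫ u₁^{i₁} ⋯ uₙ^{iₙ} μ(du)`. -/
def sphMoment {n : ℕ} (μ : Measure (Sph n)) (i : Fin n → ℕ) : ℝ :=
  ∫ u, ∏ j, ((u : En n) j) ^ (i j) ∂μ

namespace Stmt0Aux

open MvPolynomial

variable {n : ℕ}

lemma cont_eval (q : MvPolynomial (Fin n) ℝ) :
    Continuous (fun x : Sph n => eval (fun j => (x : En n) j) q) := by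
  have h : Continuous (fun x : Sph n => fun j => (x : En n) j) :=
    continuous_pi fun j => (EuclideanSpace.proj j).continuous.comp continuous_subtype_val
  exact q.continuous_eval.comp h

lemma integrable_cont (ρ : Measure (Sph n)) [IsFiniteMeasure ρ] {f : Sph n → ℝ}
    (hf : Continuous f) : Integrable f ρ :=
  hf.integrable_of_hasCompactSupport (HasCompactSupport.of_compactSpace f)

lemma norm_coe (x : Sph n) : ‖(x : En n)‖ = 1 := mem_sphere_zero_iff_norm.mp x.2

lemma inner_le_one (x y : Sph n) : ⟪(x : En n), (y : En n)⟫_ℝ ≤ 1 := by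
  have := real_inner_le_norm (x : En n) (y : En n)
  rwa [norm_coe, norm_coe, one_mul] at this

lemma inner_eq_one_iff (x y : Sph n) : ⟪(x : En n), (y : En n)⟫_ℝ = 1 ↔ x = y := by
  rw [inner_eq_one_iff_of_norm_eq_one (norm_coe x) (norm_coe y)]
  exact ⟨fun h => Subtype.ext h, fun h => congrArg _ h⟩

/-- Integral of a polynomial as a sum of moments. -/
lemma integral_eval (ρ : Measure (Sph n)) [IsFiniteMeasure ρ] (q : MvPolynomial (Fin n) ℝ) :
    ∫ x, eval (fun j => (x : En n) j) q ∂ρ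
      = ∑ d ∈ q.support, q.coeff d * sphMoment ρ (fun j => d j) := by
  have h : (fun x : Sph n => eval (fun j => (x : En n) j) q)
      = fun x : Sph n => ∑ d ∈ q.support, q.coeff d * ∏ j, ((x : En n) j) ^ (d j) := by
    funext x; rw [eval_eq']
  rw [h, integral_finset_sum]
  · refine Finset.sum_congr rfl fun d _ => ?_
    rw [MeasureTheory.integral_const_mul]
    rfl
  · intro d _
    refine integrable_cont ρ ?_
    exact continuous_const.mul (continuous_finset_prod _ fun j _ =>
      ((EuclideanSpace.proj j).continuous.comp continuous_subtype_val).pow _)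

lemma sum_apply_eq (d : Fin n →₀ ℕ) : (∑ j, d j) = d.sum fun _ e => e := by
  rw [Finsupp.sum_fintype]
  intro _; rfl

/-- If moments up to order `m` agree, integrals of polynomials of total degree `≤ m` agree. -/
lemma integral_eval_eq {m : ℕ} (μ ν : Measure (Sph n)) [IsFiniteMeasure μ] [IsFiniteMeasure ν]
    (hmom : ∀ i : Fin n → ℕ, (∑ j, i j) ≤ m → sphMoment ν i = sphMoment μ i)
    (q : MvPolynomial (Fin n) ℝ) (hq : q.totalDegree ≤ m) :
    ∫ x, eval (fun j => (x : En n) j) q ∂ν = ∫ x, eval (fun j => (x : En n) j) q ∂μ := by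
  rw [integral_eval, integral_eval]
  refine Finset.sum_congr rfl fun d hd => ?_
  rw [hmom]
  calc (∑ j, d j) = d.sum fun _ e => e := sum_apply_eq d
    _ ≤ q.totalDegree := le_totalDegree hd
    _ ≤ m := hq

/-- The linear polynomial `1 - ⟨·, v⟩`. -/
def linP (v : Sph n) : MvPolynomial (Fin n) ℝ :=
  C 1 - ∑ i, C ((v : En n) i) * X i

lemma eval_linP (v x : Sph n) :
    eval (fun j => (x : En n) j) (linP v) = 1 - ⟪(x : En n), (v : En n)⟫_ℝ := by
  simp [linP, PiLp.inner_apply, RCLike.inner_apply, mul_comm]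

lemma deg_linP (v : Sph n) : (linP v).totalDegree ≤ 1 := by
  refine (totalDegree_sub _ _).trans (max_le ?_ ?_)
  · simp [totalDegree_C]
  · refine (totalDegree_finset_sum _ _).trans (Finset.sup_le fun i _ => ?_)
    refine (totalDegree_mul _ _).trans ?_
    simp [totalDegree_C, totalDegree_X]

lemma eval_linP_nonneg (v x : Sph n) :
    0 ≤ eval (fun j => (x : En n) j) (linP v) := by
  rw [eval_linP]; linarith [inner_le_one x v]

lemma eval_linP_pos (v x : Sph n) (h : x ≠ v) :
    0 < eval (fun j => (x : En n) j) (linP v) := by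
  rw [eval_linP]
  have h1 := inner_le_one x v
  have h2 : ⟪(x : En n), (v : En n)⟫_ℝ ≠ 1 := fun hc => h ((inner_eq_one_iff x v).mp hc)
  have := lt_of_le_of_ne h1 h2
  linarith

lemma eval_linP_self (v : Sph n) :
    eval (fun j => (v : En n) j) (linP v) = 0 := by
  rw [eval_linP, real_inner_self_eq_norm_sq, norm_coe]; norm_num

end Stmt0Aux

open Stmt0Aux MvPolynomial in
/-- a finite Borel measure on the sphere with finite support
`{u_1, …, u_m}` is uniquely determined among finite Borel measures on the
sphere by its moments up to order `m`. -/
theorem stmt0 {n : ℕ} (hn : 2 ≤ n) (m : ℕ) (u : Fin m → Sph n)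
    (α : Fin m → ℝ≥0) (μ : Measure (Sph n))
    (hμ : μ = ∑ j, (α j : ℝ≥0∞) • Measure.dirac (u j))
    (ν : Measure (Sph n)) [IsFiniteMeasure ν]
    (hmom : ∀ i : Fin n → ℕ, (∑ j, i j) ≤ m → sphMoment ν i = sphMoment μ i) :
    ν = μ := by
  classical
  haveI hμfin : IsFiniteMeasure μ := by
    constructor
    rw [hμ]
    simp only [Measure.finset_sum_apply, Measure.smul_apply, Measure.dirac_apply_of_mem
      (Set.mem_univ _), smul_eq_mul, mul_one]
    exact ENNReal.sum_lt_top.mpr fun j _ => ENNReal.coe_lt_top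
  -- the finite support set
  set S : Finset (Sph n) := Finset.image u Finset.univ with hS
  have hScard : S.card ≤ m := le_trans (Finset.card_image_le) (by simp)
  -- the product polynomial vanishing exactly on S
  set P : MvPolynomial (Fin n) ℝ := ∏ j, linP (u j) with hP
  have hPdeg : P.totalDegree ≤ m := by
    refine (totalDegree_finset_prod _ _).trans ?_
    calc (∑ j, (linP (u j)).totalDegree) ≤ ∑ _j : Fin m, 1 :=
          Finset.sum_le_sum fun j _ => deg_linP (u j)
      _ = m := by simp
  have hPeval : ∀ x : Sph n, eval (fun j => (x : En n) j) P
      = ∏ j, eval (fun k => (x : En n) k) (linP (u j)) := by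
    intro x; rw [hP, map_prod]
  have hPnonneg : ∀ x : Sph n, 0 ≤ eval (fun j => (x : En n) j) P := by
    intro x; rw [hPeval]
    exact Finset.prod_nonneg fun j _ => eval_linP_nonneg _ _
  have hPzero : ∀ x : Sph n, x ∉ (S : Set (Sph n)) → 0 < eval (fun j => (x : En n) j) P := by
    intro x hx
    rw [hPeval]
    refine Finset.prod_pos fun j _ => eval_linP_pos _ _ fun hc => ?_
    exact hx (by simp [hS, hc])
  -- ∫ P dμ = 0
  have hintPμ : ∫ x, eval (fun j => (x : En n) j) P ∂μ = 0 := by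
    rw [hμ, integral_finset_sum_measure]
    · refine Finset.sum_eq_zero fun j _ => ?_
      rw [integral_smul_measure, integral_dirac, hPeval]
      have : eval (fun k => ((u j : En n)) k) (linP (u j)) = 0 := eval_linP_self (u j)
      rw [Finset.prod_eq_zero (Finset.mem_univ j) this, smul_zero]
    · intro j _
      exact ((integrable_cont _ (cont_eval P)).smul_measure ENNReal.coe_ne_top)
  -- hence ∫ P dν = 0 and ν is concentrated on S
  have hintPν : ∫ x, eval (fun j => (x : En n) j) P ∂ν = 0 := by
    rw [integral_eval_eq μ ν hmom P hPdeg, hintPμ]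
  have hνS : ν ((S : Set (Sph n))ᶜ) = 0 := by
    have hint : Integrable (fun x : Sph n => eval (fun j => (x : En n) j) P) ν :=
      integrable_cont ν (cont_eval P)
    have hae : (fun x : Sph n => eval (fun j => (x : En n) j) P) =ᵐ[ν] 0 :=
      (integral_eq_zero_iff_of_nonneg hPnonneg hint).mp hintPν
    have hsub : ((S : Set (Sph n))ᶜ) ⊆ {x | eval (fun j => (x : En n) j) P ≠ 0} := by
      intro x hx
      exact ne_of_gt (hPzero x hx)
    exact measure_mono_null hsub (by simpa [Filter.EventuallyEq] using ae_iff.mp hae)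
  have hμS : μ ((S : Set (Sph n))ᶜ) = 0 := by
    rw [hμ]
    simp only [Measure.finset_sum_apply, Measure.smul_apply]
    refine Finset.sum_eq_zero fun j _ => ?_
    rw [Measure.dirac_apply' _ (S.finite_toSet.measurableSet.compl)]
    have : u j ∈ (S : Set (Sph n)) := by simp [hS]
    simp [Set.indicator_of_notMem, this]
  -- representation of integrals for measures concentrated on S
  have hrep : ∀ (ρ : Measure (Sph n)) [IsFiniteMeasure ρ], ρ ((S : Set (Sph n))ᶜ) = 0 →
      ∀ f : Sph n → ℝ, Continuous f →
      ∫ x, f x ∂ρ = ∑ x ∈ S, (ρ {x}).toReal * f x := by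
    intro ρ _ hρ f hf
    have h1 : ρ.restrict ((S : Set (Sph n))ᶜ) = 0 := Measure.restrict_eq_zero.mpr hρ
    have h2 : ρ.restrict (S : Set (Sph n)) + ρ.restrict ((S : Set (Sph n))ᶜ) = ρ :=
      Measure.restrict_add_restrict_compl S.finite_toSet.measurableSet
    have h3 : ∫ x, f x ∂ρ = ∫ x in (S : Set (Sph n)), f x ∂ρ := by
      conv_lhs => rw [← h2]
      rw [h1, add_zero]
    rw [h3, setIntegral_finset S ((integrable_cont ρ hf).integrableOn)]
    simp [smul_eq_mul, measureReal_def]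
  -- weights agree
  have hweights : ∀ v ∈ S, ν {v} = μ {v} := by
    intro v hv
    set Q : MvPolynomial (Fin n) ℝ := ∏ w ∈ S.erase v, linP w with hQ
    have hQdeg : Q.totalDegree ≤ m := by
      refine (totalDegree_finset_prod _ _).trans ?_
      calc (∑ w ∈ S.erase v, (linP w).totalDegree) ≤ ∑ _w ∈ S.erase v, 1 :=
            Finset.sum_le_sum fun w _ => deg_linP w
        _ = (S.erase v).card := by simp
        _ ≤ S.card := Finset.card_le_card (Finset.erase_subset _ _)
        _ ≤ m := hScard
    have hQeval : ∀ x : Sph n, eval (fun j => (x : En n) j) Q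
        = ∏ w ∈ S.erase v, eval (fun k => (x : En n) k) (linP w) := by
      intro x; rw [hQ, map_prod]
    have hQzero : ∀ w ∈ S, w ≠ v → eval (fun j => (w : En n) j) Q = 0 := by
      intro w hw hwv
      rw [hQeval]
      exact Finset.prod_eq_zero (Finset.mem_erase.mpr ⟨hwv, hw⟩) (eval_linP_self w)
    have hQpos : 0 < eval (fun j => (v : En n) j) Q := by
      rw [hQeval]
      refine Finset.prod_pos fun w hw => ?_
      exact eval_linP_pos w v fun hc => (Finset.mem_erase.mp hw).1 hc.symm
    have hint : ∫ x, eval (fun j => (x : En n) j) Q ∂ν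
        = ∫ x, eval (fun j => (x : En n) j) Q ∂μ := integral_eval_eq μ ν hmom Q hQdeg
    rw [hrep ν hνS _ (cont_eval Q), hrep μ hμS _ (cont_eval Q)] at hint
    rw [Finset.sum_eq_single_of_mem v hv (fun w hw hwv => by rw [hQzero w hw hwv, mul_zero]),
        Finset.sum_eq_single_of_mem v hv (fun w hw hwv => by rw [hQzero w hw hwv, mul_zero])]
        at hint
    have htr : (ν {v}).toReal = (μ {v}).toReal :=
      mul_right_cancel₀ (ne_of_gt hQpos) hint
    exact (ENNReal.toReal_eq_toReal_iff' (measure_ne_top ν _) (measure_ne_top μ _)).mp htr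
  -- conclude
  refine Measure.ext fun A hA => ?_
  have key : ∀ (ρ : Measure (Sph n)), ρ ((S : Set (Sph n))ᶜ) = 0 →
      ρ A = ∑ w ∈ S.filter (· ∈ A), ρ {w} := by
    intro ρ hρ
    have h1 : ρ A = ρ (A ∩ S) + ρ (A \ S) :=
      (measure_inter_add_diff A S.finite_toSet.measurableSet).symm
    have h2 : ρ (A \ S) = 0 :=
      measure_mono_null (Set.diff_subset_compl A (S : Set (Sph n))) hρ
    have h3 : A ∩ (S : Set (Sph n)) = ⋃ w ∈ S.filter (· ∈ A), {w} := by
      ext x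
      simp only [Set.mem_inter_iff, Set.mem_iUnion, Finset.mem_filter, Set.mem_singleton_iff,
        Finset.mem_coe]
      constructor
      · rintro ⟨hxA, hxS⟩; exact ⟨x, ⟨hxS, hxA⟩, rfl⟩
      · rintro ⟨w, ⟨hwS, hwA⟩, rfl⟩; exact ⟨hwA, hwS⟩
    rw [h1, h2, add_zero, h3, measure_biUnion_finset ?_ (fun w _ => measurableSet_singleton w)]
    intro a _ b _ hab
    simp [Set.disjoint_singleton, hab]
  rw [key ν hνS, key μ hμS]
  exact Finset.sum_congr rfl fun w hw => hweights w (Finset.mem_filter.mp hw).1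
end
end

section
/- Let μ be a finite Borel measure on the unit sphere S^{n-1} with finite support {u_1, ..., u_m} such that the affine hull of {u_1, ..., u_m} is all of R^n. Then μ is uniquely determined among all finite Borel measures on S^{n-1} by its moments up to order m − n + 2. -/
open MeasureTheory Metric Real Filter
open scoped InnerProductSpace ENNReal NNReal Topology

noncomputable section

namespace SphAux

open MvPolynomial

variable {n : ℕ}

lemma sph_norm (w : Sph n) : ‖(w : En n)‖ = 1 := by
  have := w.2
  simpa [mem_sphere_iff_norm] using this

/-- affine polynomial -/
def aff1 (a : ℝ) (c : Fin n → ℝ) : MvPolynomial (Fin n) ℝ :=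
  C a + ∑ j, C (c j) * X j

lemma eval_aff1 (a : ℝ) (c : Fin n → ℝ) (x : En n) :
    eval x (aff1 a c) = a + ∑ j, c j * x j := by
  simp [aff1]

lemma deg_aff1 (a : ℝ) (c : Fin n → ℝ) : (aff1 a c).totalDegree ≤ 1 := by
  refine (totalDegree_add _ _).trans ?_
  simp only [totalDegree_C, max_le_iff]
  constructor
  · exact Nat.zero_le _
  · refine (totalDegree_finset_sum _ _).trans ?_
    refine Finset.sup_le fun j _ => ?_
    refine (totalDegree_mul _ _).trans ?_
    simp [totalDegree_C, (totalDegree_X j (R := ℝ)).le]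

def linP (v : En n) : MvPolynomial (Fin n) ℝ := aff1 1 (fun j => -(v j))

lemma eval_linP (v : En n) (x : En n) :
    eval x (linP v) = 1 - ∑ j, v j * x j := by
  rw [linP, eval_aff1]
  simp only [neg_mul]
  rw [Finset.sum_neg_distrib]
  ring

lemma deg_linP (v : En n) : (linP v).totalDegree ≤ 1 := deg_aff1 _ _

lemma inner_formula (v x : En n) (hv : ‖v‖ = 1) (hx : ‖x‖ = 1) :
    1 - ∑ j, v j * x j = ‖v - x‖ ^ 2 / 2 := by
  have h : ⟪v, x⟫_ℝ = ∑ j, v j * x j := by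
    simp [PiLp.inner_apply, RCLike.inner_apply, conj_trivial]
    exact Finset.sum_congr rfl fun _ _ => mul_comm _ _
  have h2 : ‖v - x‖ ^ 2 = ‖v‖ ^ 2 - 2 * ⟪v, x⟫_ℝ + ‖x‖ ^ 2 := norm_sub_sq_real v x
  rw [← h, h2, hv, hx]; ring

lemma eval_linP_sph (v : En n) (hv : ‖v‖ = 1) (w : Sph n) :
    eval (w : En n) (linP v) = ‖v - (w : En n)‖ ^ 2 / 2 := by
  rw [eval_linP, inner_formula v _ hv (sph_norm w)]

lemma eval_linP_nonneg (v : En n) (hv : ‖v‖ = 1) (w : Sph n) :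
    0 ≤ eval (w : En n) (linP v) := by
  rw [eval_linP_sph v hv w]; positivity

lemma eval_linP_pos (v : En n) (hv : ‖v‖ = 1) (w : Sph n) (hne : v ≠ (w : En n)) :
    0 < eval (w : En n) (linP v) := by
  rw [eval_linP_sph v hv w]
  have h : 0 < ‖v - (w : En n)‖ := by
    rw [norm_pos_iff]
    exact sub_ne_zero.mpr hne
  exact div_pos (pow_pos h 2) two_pos

lemma eval_linP_self (v : En n) (hv : ‖v‖ = 1) (w : Sph n) (he : v = (w : En n)) :
    eval (w : En n) (linP v) = 0 := by
  rw [eval_linP_sph v hv w, he]; simp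

/-- affine map as polynomial -/
def affP (f : En n →ᵃ[ℝ] ℝ) : MvPolynomial (Fin n) ℝ :=
  aff1 (f 0) (fun j => f.linear (EuclideanSpace.single j 1))

lemma euclid_decomp (x : En n) : ∑ j, x j • EuclideanSpace.single j (1:ℝ) = x := by
  have := (EuclideanSpace.basisFun (Fin n) ℝ).toBasis.sum_repr x
  simpa [EuclideanSpace.basisFun_apply, EuclideanSpace.basisFun_repr] using this

lemma eval_affP (f : En n →ᵃ[ℝ] ℝ) (x : En n) : eval x (affP f) = f x := by
  rw [affP, eval_aff1]
  have hx : f x = f.linear x + f 0 := by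
    rw [AffineMap.decomp f]; simp
  have hlin : f.linear x = ∑ j, x j * f.linear (EuclideanSpace.single j 1) := by
    conv_lhs => rw [← euclid_decomp x]
    rw [map_sum]
    simp only [LinearMap.map_smul, smul_eq_mul]
  rw [hx, hlin, add_comm]
  congr 1
  exact Finset.sum_congr rfl fun j _ => mul_comm _ _

lemma deg_affP (f : En n →ᵃ[ℝ] ℝ) : (affP f).totalDegree ≤ 1 := deg_aff1 _ _

/-- continuity of polynomial evaluation -/
lemma continuous_evalP (q : MvPolynomial (Fin n) ℝ) :
    Continuous fun w : Sph n => eval (w : En n) q := by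
  simp only [eval_eq']
  refine continuous_finset_sum _ fun d _ => Continuous.mul continuous_const ?_
  refine continuous_finset_prod _ fun i _ => ?_
  exact ((EuclideanSpace.proj i).continuous.comp continuous_subtype_val).pow _

lemma integrable_cont {f : Sph n → ℝ} (hf : Continuous f) (ρ : Measure (Sph n))
    [IsFiniteMeasure ρ] : Integrable f ρ := by
  have h := hf.continuousOn.integrableOn_compact (μ := ρ) isCompact_univ
  rwa [integrableOn_univ] at h

lemma integral_poly (q : MvPolynomial (Fin n) ℝ) (ρ : Measure (Sph n)) [IsFiniteMeasure ρ] :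
    ∫ w, eval (w : En n) q ∂ρ = ∑ d ∈ q.support, coeff d q * sphMoment ρ d := by
  simp only [eval_eq']
  rw [integral_finset_sum]
  · refine Finset.sum_congr rfl fun d _ => ?_
    rw [integral_const_mul]
    rfl
  · intro d _
    refine integrable_cont ?_ ρ
    refine Continuous.mul continuous_const ?_
    refine continuous_finset_prod _ fun i _ => ?_
    exact ((EuclideanSpace.proj i).continuous.comp continuous_subtype_val).pow _

end SphAux

open SphAux MvPolynomial

/-- a finite Borel measure on the sphere with finite support
`{u_1, …, u_m}` whose affine hull is all of `ℝⁿ` is uniquely determined among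
finite Borel measures on the sphere by its moments up to order `m - n + 2`. -/
theorem stmt1 {n : ℕ} (hn : 2 ≤ n) (m : ℕ) (u : Fin m → Sph n)
    (α : Fin m → ℝ≥0) (μ : Measure (Sph n))
    (hμ : μ = ∑ j, (α j : ℝ≥0∞) • Measure.dirac (u j))
    (hsupp : ∀ j, 0 < α j)
    (haff : affineSpan ℝ (Set.range fun j => ((u j : En n))) = ⊤)
    (ν : Measure (Sph n)) [IsFiniteMeasure ν]
    (hmom : ∀ i : Fin n → ℕ, (∑ j, i j) ≤ m - n + 2 → sphMoment ν i = sphMoment μ i) :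
    ν = μ := by
  classical
  obtain ⟨t, hts, htspan, htind⟩ :=
    exists_affineIndependent ℝ (En n) (Set.range fun j => ((u j : En n)))
  haveI : Fintype t := ((Set.finite_range _).subset hts).fintype
  have htspan' : affineSpan ℝ (Set.range ((↑) : t → En n)) = ⊤ := by
    rw [Subtype.range_coe, htspan, haff]
  let b : AffineBasis t ℝ (En n) := ⟨(↑), htind, htspan'⟩
  have hb : ∀ k : t, b k = (k : En n) := fun _ => rfl
  have hcard : Fintype.card t = n + 1 := by
    have h := (htind.affineSpan_eq_top_iff_card_eq_finrank_add_one).mp htspan'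
    rwa [finrank_euclideanSpace_fin] at h
  have hmemt : ∀ k : t, ∃ j, ((u j : En n)) = (k : En n) := fun k => hts k.2
  have hunit : ∀ k : t, ‖(k : En n)‖ = 1 := by
    intro k; obtain ⟨j, hj⟩ := hmemt k; rw [← hj]; exact sph_norm _
  have hcoord : ∀ x : En n, ∃ k : t, b.coord k x ≠ 0 := by
    intro x
    by_contra h
    push_neg at h
    have h1 := b.sum_coord_apply_eq_one x
    rw [Finset.sum_eq_zero (fun k _ => h k)] at h1
    exact zero_ne_one h1
  -- cardinality of index sets
  set T : Finset (Fin m) := Finset.univ.filter (fun j => (u j : En n) ∈ t) with hT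
  have hTcard : n + 1 ≤ T.card := by
    rw [← hcard, ← Set.toFinset_card]
    refine Finset.card_le_card_of_surjOn (fun j => (u j : En n)) ?_
    intro x hx
    have hx' : x ∈ t := by simpa using hx
    obtain ⟨j, hj⟩ := hts hx'
    refine ⟨j, ?_, hj⟩
    refine Finset.mem_coe.mpr (Finset.mem_filter.mpr ⟨Finset.mem_univ _, ?_⟩)
    show (u j : En n) ∈ t
    rwa [show ((u j : En n)) = x from hj]
  have hmT : n + 1 ≤ m := hTcard.trans (by simpa using Finset.card_le_card (Finset.subset_univ T))
  -- finiteness of μ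
  haveI hμfin : IsFiniteMeasure μ := by
    constructor
    rw [hμ, Measure.finset_sum_apply]
    refine ENNReal.sum_lt_top.mpr fun j _ => ?_
    rw [Measure.smul_apply, smul_eq_mul]
    exact ENNReal.mul_lt_top ENNReal.coe_lt_top (measure_lt_top _ _)
  -- integrals of polynomials agree
  have hint : ∀ q : MvPolynomial (Fin n) ℝ, q.totalDegree ≤ m - n + 2 →
      ∫ w, eval (w : En n) q ∂ν = ∫ w, eval (w : En n) q ∂μ := by
    intro q hq
    have e1 := integral_poly q ν
    have e2 := integral_poly q μ
    rw [e1, e2]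
    refine Finset.sum_congr rfl fun d hd => ?_
    have hdeg : (∑ j, d j) ≤ m - n + 2 := by
      have h1 : (d.sum fun _ e => e) ≤ q.totalDegree := le_totalDegree hd
      have h2 : (d.sum fun _ e => e) = ∑ j, d j := Finsupp.sum_fintype _ _ (fun _ => rfl)
      omega
    rw [hmom _ hdeg]
  -- μ-integral of continuous functions
  have hμint : ∀ f : Sph n → ℝ, Continuous f →
      ∫ w, f w ∂μ = ∑ j, (α j : ℝ) * f (u j) := by
    intro f hf
    have hintg : ∀ j : Fin m, Integrable f ((α j : ℝ≥0∞) • Measure.dirac (u j)) := by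
      intro j
      haveI : IsFiniteMeasure ((α j : ℝ≥0∞) • Measure.dirac (u j)) := by
        constructor
        rw [Measure.smul_apply, smul_eq_mul]
        exact ENNReal.mul_lt_top ENNReal.coe_lt_top (measure_lt_top _ _)
      exact integrable_cont hf _
    rw [hμ, integral_finset_sum_measure (fun j _ => hintg j)]
    refine Finset.sum_congr rfl fun j _ => ?_
    rw [integral_smul_measure, integral_dirac]
    simp
  -- μ vanishes outside range u
  have hrange_meas : MeasurableSet (Set.range u) := (Set.finite_range u).measurableSet
  have hμF : μ (Set.range u)ᶜ = 0 := by
    rw [hμ, Measure.finset_sum_apply]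
    refine Finset.sum_eq_zero fun j _ => ?_
    rw [Measure.smul_apply, Measure.dirac_apply' _ hrange_meas.compl]
    simp [Set.indicator_of_notMem, Set.mem_range_self]
  -- STEP 1 : ν vanishes outside range u
  set R : Finset (Fin m) := Finset.univ.filter (fun j => (u j : En n) ∉ t) with hR
  have hRcard : R.card + (n + 1) ≤ m := by
    have hdisj : Disjoint R T := by
      rw [Finset.disjoint_filter]
      intro j _ hj
      simpa using hj
    have := Finset.card_le_card (Finset.subset_univ (R ∪ T))
    rw [Finset.card_union_of_disjoint hdisj] at this
    simp only [Finset.card_univ, Fintype.card_fin] at this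
    omega
  set P : t → MvPolynomial (Fin n) ℝ := fun k =>
    (affP (b.coord k)) ^ 2 * linP (k : En n) * ∏ j ∈ R, linP ((u j : En n)) with hP
  have hPdeg : ∀ k, (P k).totalDegree ≤ m - n + 2 := by
    intro k
    refine (totalDegree_mul _ _).trans ?_
    have h1 : ((affP (b.coord k)) ^ 2 * linP (k : En n)).totalDegree ≤ 3 := by
      refine (totalDegree_mul _ _).trans ?_
      have ha := deg_affP (b.coord k)
      have hp2 := totalDegree_pow (affP (b.coord k)) 2
      have h2 := deg_linP (k : En n)
      omega
    have h2 : (∏ j ∈ R, linP ((u j : En n))).totalDegree ≤ R.card := by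
      refine (totalDegree_finset_prod _ _).trans ?_
      calc ∑ j ∈ R, (linP ((u j : En n))).totalDegree ≤ ∑ j ∈ R, 1 :=
            Finset.sum_le_sum fun j _ => deg_linP _
        _ = R.card := by simp
    omega
  have hPeval : ∀ k (w : Sph n), eval (w : En n) (P k) =
      (b.coord k (w : En n)) ^ 2 * eval (w : En n) (linP (k : En n)) *
        ∏ j ∈ R, eval (w : En n) (linP ((u j : En n))) := by
    intro k w
    simp [hP, eval_affP]
  have hPnonneg : ∀ k (w : Sph n), 0 ≤ eval (w : En n) (P k) := by
    intro k w
    rw [hPeval]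
    refine mul_nonneg (mul_nonneg (sq_nonneg _) (eval_linP_nonneg _ (hunit k) w)) ?_
    exact Finset.prod_nonneg fun j _ => eval_linP_nonneg _ (sph_norm (u j)) w
  have hPzero : ∀ k (j : Fin m), eval ((u j : Sph n) : En n) (P k) = 0 := by
    intro k j
    rw [hPeval]
    by_cases hjt : (u j : En n) ∈ t
    · by_cases hkj : ((u j : En n)) = (k : En n)
      · rw [eval_linP_self _ (hunit k) _ hkj.symm]
        ring
      · have : b.coord k (u j : En n) = 0 := by
          have := b.coord_apply_ne (i := k) (j := ⟨(u j : En n), hjt⟩)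
            (by simp [Subtype.ext_iff]; exact fun h => hkj h.symm)
          simpa [hb] using this
        rw [this]
        ring
    · have hjR : j ∈ R := by simp [hR, hjt]
      rw [Finset.prod_eq_zero hjR (eval_linP_self _ (sph_norm (u j)) _ rfl)]
      ring
  have hPνzero : ∀ k, ∫ w, eval (w : En n) (P k) ∂ν = 0 := by
    intro k
    rw [hint _ (hPdeg k), hμint _ (continuous_evalP _)]
    simp [hPzero]
  have hstep1 : ν (Set.range u)ᶜ = 0 := by
    have hae : ∀ k : t, ν {w : Sph n | eval (w : En n) (P k) ≠ 0} = 0 := by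
      intro k
      have hint0 : Integrable (fun w : Sph n => eval (w : En n) (P k)) ν :=
        integrable_cont (continuous_evalP _) ν
      have h2 := ae_iff.mp ((integral_eq_zero_iff_of_nonneg (hPnonneg k) hint0).mp (hPνzero k))
      simpa using h2
    refine le_antisymm ?_ zero_le
    refine le_trans (measure_mono ?_) (le_of_eq (measure_iUnion_null fun k : t => hae k))
    intro w hw
    obtain ⟨k, hk⟩ := hcoord (w : En n)
    refine Set.mem_iUnion.mpr ⟨k, ?_⟩
    have hne : ∀ j : Fin m, ((u j : En n)) ≠ (w : En n) := by
      intro j hj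
      exact hw ⟨j, Subtype.coe_injective hj⟩
    have hkw : (k : En n) ≠ (w : En n) := by
      intro hkw
      obtain ⟨j, hj⟩ := hmemt k
      exact hne j (hj.trans hkw)
    have hpos : 0 < eval (w : En n) (P k) := by
      rw [hPeval]
      refine mul_pos (mul_pos ?_ (eval_linP_pos _ (hunit k) w hkw)) ?_
      · exact lt_of_le_of_ne (sq_nonneg _) (Ne.symm (pow_ne_zero 2 hk))
      · exact Finset.prod_pos fun j _ => eval_linP_pos _ (sph_norm (u j)) w (hne j)
    exact hpos.ne'
  -- generic representation of integrals for measures supported on range u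
  set Fs : Finset (Sph n) := Finset.univ.image u with hFs
  have hFscoe : (Fs : Set (Sph n)) = Set.range u := by
    simp [hFs]
  have hkey : ∀ (ρ : Measure (Sph n)), IsFiniteMeasure ρ → ρ (Set.range u)ᶜ = 0 →
      ∀ f : Sph n → ℝ, Continuous f →
      ∫ w, f w ∂ρ = ∑ p ∈ Fs, (ρ {p}).toReal * f p := by
    intro ρ hρfin hρF f hf
    haveI := hρfin
    have hres : ρ.restrict (Fs : Set (Sph n)) = ρ := by
      refine Measure.restrict_eq_self_of_ae_mem ?_
      rw [ae_iff]
      have hc : {a : Sph n | ¬ a ∈ (Fs : Set (Sph n))} = (Set.range u)ᶜ := by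
        rw [hFscoe, Set.compl_def]
      rw [hc]
      exact hρF
    have := integral_finset (μ := ρ) Fs (f := f) ((integrable_cont hf ρ).integrableOn)
    rw [hres] at this
    simpa [smul_eq_mul, measureReal_def] using this
  -- STEP 2 : pointwise masses agree
  have hstep2 : ∀ j₀ : Fin m, ν {u j₀} = μ {u j₀} := by
    intro j₀
    obtain ⟨k, hk⟩ := hcoord ((u j₀ : Sph n) : En n)
    set S : Finset (Fin m) := Finset.univ.filter
      (fun j => ((u j : En n) ∉ t ∨ (u j : En n) = (k : En n)) ∧ u j ≠ u j₀) with hS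
    have hScard : S.card + n ≤ m := by
      set T' : Finset (Fin m) := Finset.univ.filter
        (fun j => (u j : En n) ∈ t ∧ (u j : En n) ≠ (k : En n)) with hT'
      have hT'card : n ≤ T'.card := by
        have herase : ((t.toFinset.erase (k : En n)).card) = n := by
          rw [Finset.card_erase_of_mem (by simpa [Set.mem_toFinset] using k.2)]
          rw [Set.toFinset_card, hcard]
          omega
        rw [← herase]
        refine Finset.card_le_card_of_surjOn (fun j => (u j : En n)) ?_
        intro x hx
        rw [Finset.coe_erase, Set.mem_diff] at hx
        obtain ⟨hx1, hx2⟩ := hx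
        have hx1' : x ∈ t := by simpa using hx1
        obtain ⟨j, hj⟩ := hts hx1'
        refine ⟨j, ?_, hj⟩
        refine Finset.mem_coe.mpr (Finset.mem_filter.mpr ⟨Finset.mem_univ _, ?_, ?_⟩)
        · show (u j : En n) ∈ t
          rwa [show ((u j : En n)) = x from hj]
        · show (u j : En n) ≠ (k : En n)
          rw [show ((u j : En n)) = x from hj]
          simpa using hx2
      have hdisj : Disjoint S T' := by
        rw [Finset.disjoint_filter]
        intro j _ hj1 hj2
        rcases hj1.1 with h | h
        · exact h hj2.1
        · exact hj2.2 h
      have := Finset.card_le_card (Finset.subset_univ (S ∪ T'))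
      rw [Finset.card_union_of_disjoint hdisj] at this
      simp only [Finset.card_univ, Fintype.card_fin] at this
      omega
    set Q : MvPolynomial (Fin n) ℝ :=
      (affP (b.coord k)) ^ 2 * ∏ j ∈ S, linP ((u j : En n)) with hQ
    have hQdeg : Q.totalDegree ≤ m - n + 2 := by
      refine (totalDegree_mul _ _).trans ?_
      have ha := deg_affP (b.coord k)
      have hp2 := totalDegree_pow (affP (b.coord k)) 2
      have h2 : (∏ j ∈ S, linP ((u j : En n))).totalDegree ≤ S.card := by
        refine (totalDegree_finset_prod _ _).trans ?_
        calc ∑ j ∈ S, (linP ((u j : En n))).totalDegree ≤ ∑ j ∈ S, 1 :=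
              Finset.sum_le_sum fun j _ => deg_linP _
          _ = S.card := by simp
      omega
    have hQeval : ∀ w : Sph n, eval (w : En n) Q =
        (b.coord k (w : En n)) ^ 2 * ∏ j ∈ S, eval (w : En n) (linP ((u j : En n))) := by
      intro w
      simp [hQ, eval_affP]
    -- Q vanishes at u j for u j ≠ u j₀
    have hQzero : ∀ j : Fin m, u j ≠ u j₀ → eval ((u j : Sph n) : En n) Q = 0 := by
      intro j hjne
      rw [hQeval]
      by_cases hcase : (u j : En n) ∈ t ∧ (u j : En n) ≠ (k : En n)
      · have : b.coord k (u j : En n) = 0 := by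
          have := b.coord_apply_ne (i := k) (j := ⟨(u j : En n), hcase.1⟩)
            (by simp [Subtype.ext_iff]; exact fun h => hcase.2 h.symm)
          simpa [hb] using this
        rw [this]
        ring
      · have hjS : j ∈ S := by
          rw [hS, Finset.mem_filter]
          refine ⟨Finset.mem_univ _, ?_, hjne⟩
          by_cases h1 : (u j : En n) ∈ t
          · right
            by_contra h2
            exact hcase ⟨h1, h2⟩
          · left; exact h1
        rw [Finset.prod_eq_zero hjS (eval_linP_self _ (sph_norm (u j)) _ rfl)]
        ring
    have hQpos : 0 < eval ((u j₀ : Sph n) : En n) Q := by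
      rw [hQeval]
      refine mul_pos (lt_of_le_of_ne (sq_nonneg _) (Ne.symm (pow_ne_zero 2 hk))) ?_
      refine Finset.prod_pos fun j hj => ?_
      rw [hS, Finset.mem_filter] at hj
      refine eval_linP_pos _ (sph_norm (u j)) _ ?_
      exact fun h => hj.2.2 (Subtype.coe_injective h)
    -- compare integrals
    have hcomp : (ν {u j₀}).toReal * eval ((u j₀ : Sph n) : En n) Q =
        (μ {u j₀}).toReal * eval ((u j₀ : Sph n) : En n) Q := by
      have hν := hkey ν inferInstance hstep1 _ (continuous_evalP Q)
      have hμ' := hkey μ inferInstance hμF _ (continuous_evalP Q)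
      have heq := (hint Q hQdeg).symm
      rw [hν, hμ'] at heq
      have hsum : ∀ (ρ : Measure (Sph n)),
          ∑ p ∈ Fs, (ρ {p}).toReal * eval ((p : Sph n) : En n) Q =
          (ρ {u j₀}).toReal * eval ((u j₀ : Sph n) : En n) Q := by
        intro ρ
        refine Finset.sum_eq_single _ ?_ ?_
        · intro p hp hpne
          rw [hFs, Finset.mem_image] at hp
          obtain ⟨j, _, hj⟩ := hp
          subst hj
          rw [hQzero j (fun h => hpne (by rw [h]))]
          ring
        · intro hnot
          exact absurd (Finset.mem_image_of_mem u (Finset.mem_univ j₀)) hnot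
      rw [hsum ν, hsum μ] at heq
      exact heq.symm
    have htoReal : (ν {u j₀}).toReal = (μ {u j₀}).toReal :=
      mul_right_cancel₀ hQpos.ne' hcomp
    exact (ENNReal.toReal_eq_toReal_iff' (measure_ne_top ν _) (measure_ne_top μ _)).mp htoReal
  -- conclude
  have hfinmeas : ∀ (ρ : Measure (Sph n)) (G : Finset (Sph n)), ρ (G : Set (Sph n)) = ∑ x ∈ G, ρ {x} := by
    intro ρ G
    have h1 : (G : Set (Sph n)) = ⋃ x ∈ G, ({x} : Set (Sph n)) := by
      ext y
      simp only [Set.mem_iUnion, Set.mem_singleton_iff, Finset.mem_coe]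
      exact ⟨fun h => ⟨y, h, rfl⟩, fun ⟨x, hx, hyx⟩ => hyx ▸ hx⟩
    rw [h1]
    rw [measure_biUnion_finset ?_ (fun x _ => measurableSet_singleton x)]
    intro x _ y _ hxy
    simp [Set.disjoint_singleton_left, hxy]
  refine Measure.ext fun s hs => ?_
  have hνs : ν s = ν (s ∩ Set.range u) := by
    have h1 := measure_inter_add_diff (μ := ν) s hrange_meas
    have h2 : ν (s \ Set.range u) = 0 :=
      le_antisymm (le_trans (measure_mono (Set.diff_subset_compl _ _)) hstep1.le) zero_le
    rw [← h1, h2, add_zero]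
  have hμs : μ s = μ (s ∩ Set.range u) := by
    have h1 := measure_inter_add_diff (μ := μ) s hrange_meas
    have h2 : μ (s \ Set.range u) = 0 :=
      le_antisymm (le_trans (measure_mono (Set.diff_subset_compl _ _)) hμF.le) zero_le
    rw [← h1, h2, add_zero]
  have hset : s ∩ Set.range u = ((Fs.filter (· ∈ s) : Finset (Sph n)) : Set (Sph n)) := by
    ext x
    constructor
    · rintro ⟨hxs, j, rfl⟩
      exact Finset.mem_coe.mpr (Finset.mem_filter.mpr
        ⟨Finset.mem_image_of_mem u (Finset.mem_univ j), hxs⟩)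
    · intro hx
      have hx' := Finset.mem_filter.mp (Finset.mem_coe.mp hx)
      refine ⟨hx'.2, ?_⟩
      rw [← hFscoe]
      exact hx'.1
  calc ν s = ν ((Fs.filter (· ∈ s) : Finset (Sph n)) : Set (Sph n)) := by rw [hνs, hset]
    _ = ∑ x ∈ Fs.filter (· ∈ s), ν {x} := hfinmeas ν _
    _ = ∑ x ∈ Fs.filter (· ∈ s), μ {x} := by
        refine Finset.sum_congr rfl fun x hx => ?_
        obtain ⟨j, _, hj⟩ := Finset.mem_image.mp (Finset.mem_filter.mp hx).1
        rw [← hj]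
        exact hstep2 j
    _ = μ ((Fs.filter (· ∈ s) : Finset (Sph n)) : Set (Sph n)) := (hfinmeas μ _).symm
    _ = μ s := by rw [← hset, ← hμs]
end
end

section
/- Let u_1, ..., u_{n+1} ∈ S^{n-1} with affine hull equal to R^n, and for each j let A_j be the affine hull of the remaining n points, a hyperplane {x : ⟨x, v^j⟩ = β_j}. Then for any further points u_{n+2}, ..., u_m ∈ S^{n-1}, the polynomial p(u) = Σ_{j=1}^{n+1} (⟨u, v^j⟩ − β_j)^2 (1 − ⟨u, u_j⟩) Π_{k=n+2}^{m} (1 − ⟨u, u_k⟩) is nonnegative on S^{n-1}, has degree at most m − n + 2, vanishes at u_1, ..., u_m, and is strictly positive at every other point of S^{n-1}. -/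
open MeasureTheory Metric Real Filter
open scoped InnerProductSpace ENNReal NNReal Topology

noncomputable section

private def Lpoly {n : ℕ} (a : En n) (c : ℝ) : MvPolynomial (Fin n) ℝ :=
  (∑ i, MvPolynomial.C (a i) * MvPolynomial.X i) + MvPolynomial.C c

private lemma Lpoly_totalDegree {n : ℕ} (a : En n) (c : ℝ) :
    (Lpoly a c).totalDegree ≤ 1 := by
  refine (MvPolynomial.totalDegree_add _ _).trans ?_
  simp only [MvPolynomial.totalDegree_C, max_le_iff]
  refine ⟨(MvPolynomial.totalDegree_finset_sum _ _).trans ?_, Nat.zero_le _⟩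
  refine Finset.sup_le fun i _ => ?_
  refine (MvPolynomial.totalDegree_mul _ _).trans ?_
  simp [MvPolynomial.totalDegree_X]

private lemma Lpoly_eval {n : ℕ} (a : En n) (c : ℝ) (x : En n) :
    MvPolynomial.eval (fun i => x i) (Lpoly a c) = ⟪x, a⟫_ℝ + c := by
  simp [Lpoly, PiLp.inner_apply, RCLike.inner_apply, mul_comm]

/-- with `m = (n+1) + k` points on the sphere, the first `n+1` of
which (`w`) affinely span `ℝⁿ`, hyperplanes `A_j = {x : ⟪x, v j⟫ = β j}` equal to
the affine hulls of the remaining `n` of the first points, and further points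
`extra : Fin k → Sph n`, the polynomial
`p(u) = ∑ j (⟪u,v j⟫ - β j)² (1 - ⟪u,w j⟫) ∏ t (1 - ⟪u, extra t⟫)`
is nonnegative on the sphere, is (the restriction of) a polynomial of total
degree at most `m - n + 2 = k + 3`, vanishes at each `w j` and `extra t`, and is
strictly positive at every other point of the sphere. -/
theorem stmt2 {n : ℕ} (hn : 2 ≤ n) (k : ℕ)
    (w : Fin (n + 1) → Sph n) (v : Fin (n + 1) → Sph n) (β : Fin (n + 1) → ℝ)
    (haff : affineSpan ℝ (Set.range fun j => ((w j : En n))) = ⊤)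
    (hA : ∀ j, {x : En n | ⟪x, (v j : En n)⟫_ℝ = β j}
      = (affineSpan ℝ ((fun i => (w i : En n)) '' {i | i ≠ j}) : Set (En n)))
    (extra : Fin k → Sph n)
    (p : En n → ℝ)
    (hp : p = fun x => ∑ j, (⟪x, (v j : En n)⟫_ℝ - β j) ^ 2
        * (1 - ⟪x, (w j : En n)⟫_ℝ) * ∏ t, (1 - ⟪x, (extra t : En n)⟫_ℝ)) :
    (∀ x ∈ Sph n, 0 ≤ p x) ∧
    (∃ P : MvPolynomial (Fin n) ℝ, P.totalDegree ≤ k + 3 ∧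
      ∀ x : En n, MvPolynomial.eval (fun i => x i) P = p x) ∧
    (∀ j, p (w j) = 0) ∧ (∀ t, p (extra t) = 0) ∧
    (∀ x ∈ Sph n, (∀ j, x ≠ (w j : En n)) → (∀ t, x ≠ (extra t : En n)) → 0 < p x) := by
  subst hp
  have hwn : ∀ j, ‖(w j : En n)‖ = 1 := fun j =>
    mem_sphere_zero_iff_norm.mp (w j).2
  have hen : ∀ t, ‖(extra t : En n)‖ = 1 := fun t =>
    mem_sphere_zero_iff_norm.mp (extra t).2
  have key2 : ∀ x : En n, ‖x‖ = 1 → ∀ y : En n, ‖y‖ = 1 → 0 ≤ 1 - ⟪x, y⟫_ℝ := by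
    intro x hx y hy
    have := real_inner_le_norm x y
    rw [hx, hy] at this; linarith
  have key3 : ∀ x : En n, ‖x‖ = 1 → ∀ y : En n, ‖y‖ = 1 → x ≠ y → 0 < 1 - ⟪x, y⟫_ℝ := by
    intro x hx y hy hne
    have := (inner_lt_one_iff_real_of_norm_eq_one hx hy).mpr hne
    linarith
  have hself : ∀ x : En n, ‖x‖ = 1 → (1 : ℝ) - ⟪x, x⟫_ℝ = 0 := by
    intro x hx
    rw [real_inner_self_eq_norm_sq, hx]; norm_num
  -- affine independence and barycentric coordinates
  have hind : AffineIndependent ℝ (fun j => ((w j : En n))) := by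
    rw [affineIndependent_iff_le_finrank_vectorSpan ℝ _ (Fintype.card_fin (n+1))]
    rw [AffineSubspace.vectorSpan_eq_top_of_affineSpan_eq_top ℝ _ _ haff]
    simp [finrank_euclideanSpace]
  set b : AffineBasis (Fin (n + 1)) ℝ (En n) := ⟨fun j => (w j : En n), hind, haff⟩ with hb
  have hcoord : ∀ (j : Fin (n + 1)) (x : En n),
      x ∈ (affineSpan ℝ ((fun i => (w i : En n)) '' {i | i ≠ j}) : Set (En n)) →
      b.coord j x = 0 := by
    intro j x hx
    have hle : affineSpan ℝ ((fun i => (w i : En n)) '' {i | i ≠ j}) ≤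
        AffineSubspace.comap (b.coord j) (affineSpan ℝ ({(0:ℝ)} : Set ℝ)) := by
      rw [affineSpan_le]
      rintro y ⟨i, hi, rfl⟩
      have : b.coord j (b i) = 0 := by
        rw [AffineBasis.coord_apply]
        simp [Ne.symm hi]
      simp only [AffineSubspace.coe_comap, Set.mem_preimage]
      rw [show b.coord j (w i : En n) = b.coord j (b i) from rfl, this]
      exact subset_affineSpan ℝ _ rfl
    have := hle hx
    simp only [AffineSubspace.mem_comap] at this
    simpa using (AffineSubspace.mem_affineSpan_singleton ℝ _).mp this
  have hnotall : ∀ x : En n, ¬ (∀ j, ⟪x, (v j : En n)⟫_ℝ = β j) := by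
    intro x hall
    have hz : ∀ j, b.coord j x = 0 := by
      intro j
      apply hcoord j x
      rw [← hA j]
      exact hall j
    have := b.sum_coord_apply_eq_one x
    simp [hz] at this
  -- membership of w j in hyperplane A_i for i ≠ j
  have hmem : ∀ (i j : Fin (n + 1)), i ≠ j → ⟪(w j : En n), (v i : En n)⟫_ℝ = β i := by
    intro i j hij
    have : (w j : En n) ∈ {x : En n | ⟪x, (v i : En n)⟫_ℝ = β i} := by
      rw [hA i]
      exact subset_affineSpan ℝ _ ⟨j, Ne.symm hij, rfl⟩
    exact this
  refine ⟨?_, ?_, ?_, ?_, ?_⟩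
  · -- nonnegativity on the sphere
    intro x hx
    have hx1 : ‖x‖ = 1 := mem_sphere_zero_iff_norm.mp hx
    refine Finset.sum_nonneg fun j _ => ?_
    refine mul_nonneg (mul_nonneg (sq_nonneg _) (key2 x hx1 _ (hwn j))) ?_
    exact Finset.prod_nonneg fun t _ => key2 x hx1 _ (hen t)
  · -- polynomial representation
    refine ⟨∑ j, (Lpoly (v j) (-β j))^2 * Lpoly (-(w j : En n)) 1
        * ∏ t, Lpoly (-(extra t : En n)) 1, ?_, ?_⟩
    · refine (MvPolynomial.totalDegree_finset_sum _ _).trans ?_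
      refine Finset.sup_le fun j _ => ?_
      refine (MvPolynomial.totalDegree_mul _ _).trans ?_
      have h1 : ((Lpoly (v j : En n) (-β j))^2).totalDegree ≤ 2 :=
        (MvPolynomial.totalDegree_pow _ _).trans
          (by simpa using Nat.mul_le_mul_left 2 (Lpoly_totalDegree _ _))
      have h2 := Lpoly_totalDegree (-(w j : En n)) 1
      have h3 : (∏ t, Lpoly (-(extra t : En n)) (1:ℝ)).totalDegree ≤ k := by
        refine (MvPolynomial.totalDegree_finset_prod _ _).trans ?_
        calc ∑ t : Fin k, (Lpoly (-(extra t : En n)) (1:ℝ)).totalDegree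
            ≤ ∑ _t : Fin k, 1 := Finset.sum_le_sum fun t _ => Lpoly_totalDegree _ _
          _ = k := by simp
      have := add_le_add ((MvPolynomial.totalDegree_mul _ _).trans (add_le_add h1 h2)) h3
      omega
    · intro x
      simp only [map_sum, map_mul, map_pow, map_prod, Lpoly_eval, inner_neg_right]
      congr 1; funext j; ring_nf
  · -- vanishing at w j
    intro j
    refine Finset.sum_eq_zero fun i _ => ?_
    by_cases hij : i = j
    · subst hij
      rw [hself _ (hwn i)]
      ring
    · rw [hmem i j (by simpa using hij)]
      ring
  · -- vanishing at extra t
    intro t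
    refine Finset.sum_eq_zero fun j _ => ?_
    rw [Finset.prod_eq_zero (Finset.mem_univ t) (hself _ (hen t))]
    ring
  · -- strict positivity
    intro x hx hnw hne
    have hx1 : ‖x‖ = 1 := mem_sphere_zero_iff_norm.mp hx
    obtain ⟨j, hj⟩ := not_forall.mp (hnotall x)
    have hterm : ∀ i : Fin (n + 1), 0 ≤ (⟪x, (v i : En n)⟫_ℝ - β i) ^ 2
        * (1 - ⟪x, (w i : En n)⟫_ℝ) * ∏ t, (1 - ⟪x, (extra t : En n)⟫_ℝ) := by
      intro i
      refine mul_nonneg (mul_nonneg (sq_nonneg _) (key2 x hx1 _ (hwn i))) ?_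
      exact Finset.prod_nonneg fun t _ => key2 x hx1 _ (hen t)
    refine Finset.sum_pos' (fun i _ => hterm i) ⟨j, Finset.mem_univ j, ?_⟩
    refine mul_pos (mul_pos ?_ (key3 x hx1 _ (hwn j) (hnw j))) ?_
    · have hne0 : ⟪x, (v j : En n)⟫_ℝ - β j ≠ 0 := sub_ne_zero.mpr hj
      positivity
    · exact Finset.prod_pos fun t _ => key3 x hx1 _ (hen t) (hne t)
end
end

section
/- For every m ≥ 3, the regular polygon P_m in R^2 with outer facet normals u_j = (cos(2πj/m), sin(2πj/m)) and all facet lengths equal to 2π/m has the same surface tensors as the unit disc B^2 up to rank m − 1. -/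
open MeasureTheory Metric Real Filter
open scoped InnerProductSpace ENNReal NNReal Topology

noncomputable section

lemma keyexp (m : ℕ) (hm : 0 < m) (k : ℤ) (hk : k.natAbs < m) :
    (2 * (π:ℂ) / m) * ∑ j ∈ Finset.range m, Complex.exp (k * ((2*π*j/m : ℝ) : ℂ) * Complex.I)
      = ∫ θ in (0:ℝ)..(2*π), Complex.exp (k * (θ:ℂ) * Complex.I) := by
  have hm0 : (m : ℂ) ≠ 0 := Nat.cast_ne_zero.mpr hm.ne'
  rcases eq_or_ne k 0 with rfl | hk0
  · simp only [Int.cast_zero, zero_mul, Complex.exp_zero, Finset.sum_const,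
      Finset.card_range, nsmul_eq_mul, mul_one]
    rw [intervalIntegral.integral_const]
    rw [sub_zero, Complex.real_smul, Complex.ofReal_mul]
    push_cast
    field_simp
  · have hne : Complex.exp ((k : ℂ) * (2*π/m) * Complex.I) ≠ 1 := by
      intro h
      obtain ⟨n, hn⟩ := Complex.exp_eq_one_iff.mp h
      have hπ : (π : ℂ) ≠ 0 := Complex.ofReal_ne_zero.mpr Real.pi_ne_zero
      have hkn : (k : ℂ) = n * m := by
        have h2 : (2*(π:ℂ)*Complex.I) ≠ 0 := by
          simp [hπ, Complex.I_ne_zero]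
        field_simp at hn
        have h3 : (k:ℂ) * (2*π*Complex.I) = (n*m) * (2*π*Complex.I) := by
          linear_combination (2*π*Complex.I) * hn
        exact mul_right_cancel₀ h2 h3
      have hkn' : k = n * m := by exact_mod_cast hkn
      have hn0 : n ≠ 0 := by rintro rfl; simp at hkn'; omega
      have habs : k.natAbs = n.natAbs * m := by
        rw [hkn', Int.natAbs_mul, Int.natAbs_natCast]
      have hle : m ≤ n.natAbs * m := Nat.le_mul_of_pos_left m (Int.natAbs_pos.mpr hn0)
      omega
    have hsum : ∑ j ∈ Finset.range m, Complex.exp (k * ((2*π*j/m : ℝ) : ℂ) * Complex.I)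
        = ∑ j ∈ Finset.range m, (Complex.exp ((k : ℂ) * (2*π/m) * Complex.I)) ^ j := by
      refine Finset.sum_congr rfl fun j _ => ?_
      rw [← Complex.exp_nat_mul]
      congr 1
      push_cast
      field_simp
    rw [hsum, geom_sum_eq hne]
    have hxm : (Complex.exp ((k : ℂ) * (2*π/m) * Complex.I)) ^ m = 1 := by
      rw [← Complex.exp_nat_mul]
      have : (m : ℂ) * ((k : ℂ) * (2*π/m) * Complex.I) = k * (2*π*Complex.I) := by
        field_simp
      rw [this, Complex.exp_int_mul_two_pi_mul_I]
    rw [hxm]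
    simp only [sub_self, zero_div, mul_zero]
    have hc : (k : ℂ) * Complex.I ≠ 0 := by
      simp [Complex.I_ne_zero, hk0]
    have : ∀ θ : ℝ, (k:ℂ) * (θ:ℂ) * Complex.I = ((k:ℂ) * Complex.I) * θ := fun θ => by ring
    simp only [this]
    rw [integral_exp_mul_complex hc]
    have h1 : Complex.exp ((k:ℂ) * Complex.I * (2*π:ℝ)) = 1 := by
      have : (k:ℂ) * Complex.I * ((2*π:ℝ):ℂ) = k * (2*π*Complex.I) := by push_cast; ring
      rw [this, Complex.exp_int_mul_two_pi_mul_I]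
    rw [h1]
    simp


lemma pow_inv_pow (θ : ℝ) (s t : ℕ) :
    (Complex.exp ((θ:ℂ) * Complex.I))^s * ((Complex.exp ((θ:ℂ) * Complex.I))⁻¹)^t
      = Complex.exp (((s:ℤ) - t : ℤ) * (θ:ℂ) * Complex.I) := by
  set w := Complex.exp ((θ:ℂ) * Complex.I) with hw
  have hw0 : w ≠ 0 := Complex.exp_ne_zero _
  have h1 : Complex.exp ((((s:ℤ) - t : ℤ) : ℂ) * ((θ:ℂ) * Complex.I)) = w ^ ((s:ℤ) - t) := by
    rw [hw, Complex.exp_int_mul]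
  rw [mul_assoc, h1, zpow_sub₀ hw0, zpow_natCast, zpow_natCast, div_eq_mul_inv, inv_pow]

lemma expand (a b : ℕ) (θ : ℝ) :
    (Complex.cos θ)^a * (Complex.sin θ)^b =
      ∑ p ∈ Finset.range (a+1), ∑ q ∈ Finset.range (b+1),
        ((a.choose p : ℂ) * (b.choose q) * (-1)^(b-q) * Complex.I^b / 2^(a+b)) *
          Complex.exp (((2*(p:ℤ) - 2*(q:ℤ) + (b:ℤ) - (a:ℤ) : ℤ) : ℂ) * (θ:ℂ) * Complex.I) := by
  set w := Complex.exp ((θ:ℂ) * Complex.I) with hw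
  have hw0 : w ≠ 0 := Complex.exp_ne_zero _
  have hinv : Complex.exp (-(θ:ℂ) * Complex.I) = w⁻¹ := by
    rw [hw, ← Complex.exp_neg]; ring_nf
  have hc : (Complex.cos θ)^a = (∑ p ∈ Finset.range (a+1),
      w^p * (w⁻¹)^(a-p) * (a.choose p : ℂ)) / 2^a := by
    rw [Complex.cos, hinv, div_pow, add_pow]
  have hs : (Complex.sin θ)^b = (∑ q ∈ Finset.range (b+1),
      (w⁻¹)^q * (-w)^(b-q) * (b.choose q : ℂ)) * Complex.I^b / 2^b := by
    rw [Complex.sin, hinv]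
    rw [show (w⁻¹ - w) * Complex.I / 2 = (w⁻¹ + (-w)) * Complex.I / 2 by ring]
    rw [div_pow, mul_pow, add_pow]
  rw [hc, hs]
  set A := ∑ p ∈ Finset.range (a+1), w^p * (w⁻¹)^(a-p) * (a.choose p : ℂ) with hA
  set B := ∑ q ∈ Finset.range (b+1), (w⁻¹)^q * (-w)^(b-q) * (b.choose q : ℂ) with hB
  rw [show A / 2^a * (B * Complex.I^b / 2^b) = (A * B) * (Complex.I^b / 2^(a+b)) from by
    rw [pow_add]; ring]
  rw [hA, hB, Finset.sum_mul_sum, Finset.sum_mul]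
  refine Finset.sum_congr rfl fun p hp => ?_
  rw [Finset.sum_mul]
  refine Finset.sum_congr rfl fun q hq => ?_
  have hpa : p ≤ a := Nat.lt_succ_iff.mp (Finset.mem_range.mp hp)
  have hqb : q ≤ b := Nat.lt_succ_iff.mp (Finset.mem_range.mp hq)
  have hneg : (-w)^(b-q) = (-1)^(b-q) * w^(b-q) := by rw [neg_pow]
  have hprod : w^p * (w⁻¹)^(a-p) * (w⁻¹^q * w^(b-q)) = w^(p+(b-q)) * (w⁻¹)^((a-p)+q) := by
    rw [pow_add, pow_add]; ring
  have hexp : (w:ℂ)^(p+(b-q)) * (w⁻¹)^((a-p)+q)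
      = Complex.exp (((2*(p:ℤ) - 2*(q:ℤ) + (b:ℤ) - (a:ℤ) : ℤ) : ℂ) * (θ:ℂ) * Complex.I) := by
    rw [hw, pow_inv_pow]
    have : ((p+(b-q) : ℕ) : ℤ) - ((a-p)+q : ℕ) = 2*(p:ℤ) - 2*(q:ℤ) + (b:ℤ) - (a:ℤ) := by
      omega
    rw [this]
  calc w^p * (w⁻¹)^(a-p) * (a.choose p : ℂ) * ((w⁻¹)^q * (-w)^(b-q) * (b.choose q : ℂ)) * (Complex.I^b / 2^(a+b))
      = ((a.choose p : ℂ) * (b.choose q) * (-1)^(b-q) * Complex.I^b / 2^(a+b)) *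
        (w^p * (w⁻¹)^(a-p) * (w⁻¹^q * w^(b-q))) := by rw [hneg]; ring
    _ = _ := by rw [hprod, hexp]

set_option maxHeartbeats 1000000 in
lemma keyCC (m a b : ℕ) (hm : 0 < m) (hab : a + b < m) :
    (2 * (π:ℂ) / m) * ∑ j ∈ Finset.range m,
        (Complex.cos (2 * (π:ℂ) * j / m))^a * (Complex.sin (2 * (π:ℂ) * j / m))^b
      = ∫ θ in (0:ℝ)..(2*π), (Complex.cos (θ:ℂ))^a * (Complex.sin (θ:ℂ))^b := by
  have hcast : ∀ j : ℕ, (2 * (π:ℂ) * j / m) = ((2*π*j/m : ℝ) : ℂ) := by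
    intro j; push_cast; ring
  simp only [hcast]
  simp only [expand a b]
  have hint : ∀ (c : ℂ) (k : ℤ), IntervalIntegrable
      (fun θ : ℝ => c * Complex.exp (k * (θ:ℂ) * Complex.I)) volume 0 (2*π) := by
    intro c k
    apply Continuous.intervalIntegrable
    exact continuous_const.mul (Complex.continuous_exp.comp
      ((continuous_const.mul Complex.continuous_ofReal).mul continuous_const))
  rw [intervalIntegral.integral_finset_sum]
  swap
  · intro p _
    rw [← Finset.sum_fn]
    exact IntervalIntegrable.sum _ (fun q _ => hint _ _)
  simp only [Finset.mul_sum]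
  rw [Finset.sum_comm]
  refine Finset.sum_congr rfl fun p hp => ?_
  rw [intervalIntegral.integral_finset_sum (fun q _ => hint _ _), Finset.sum_comm]
  refine Finset.sum_congr rfl fun q hq => ?_
  have hpa : p ≤ a := Nat.lt_succ_iff.mp (Finset.mem_range.mp hp)
  have hqb : q ≤ b := Nat.lt_succ_iff.mp (Finset.mem_range.mp hq)
  set k : ℤ := 2*(p:ℤ) - 2*q + b - a with hk
  set c : ℂ := ((a.choose p : ℂ) * (b.choose q) * (-1)^(b-q) * Complex.I^b / 2^(a+b)) with hc
  have hknat : k.natAbs < m := by omega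
  rw [intervalIntegral.integral_const_mul, ← keyexp m hm k hknat, Finset.mul_sum]
  rw [Finset.mul_sum]
  refine Finset.sum_congr rfl fun j _ => ?_
  ring

lemma keyR (m a b : ℕ) (hm : 0 < m) (hab : a + b < m) :
    (2*π/m) * ∑ j ∈ Finset.range m, (Real.cos (2*π*j/m))^a * (Real.sin (2*π*j/m))^b
      = ∫ θ in (0:ℝ)..(2*π), (Real.cos θ)^a * (Real.sin θ)^b := by
  apply Complex.ofReal_injective
  rw [← intervalIntegral.integral_ofReal]
  push_cast [Complex.ofReal_cos, Complex.ofReal_sin]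
  exact keyCC m a b hm hab

/-- for `m ≥ 3`, the regular polygon `P_m` in `ℝ²` with outer
normals `u_j = (cos(2πj/m), sin(2πj/m))` and all facet lengths `2π/m` has the
same surface tensors as the unit disc up to rank `m - 1`; equivalently, its
surface area measure `∑_j (2π/m) δ_{u_j}` and the arc-length measure on `S¹`
(the surface area measure of the disc) have the same moments up to order
`m - 1`. -/
theorem stmt4 (m : ℕ) (hm : 3 ≤ m)
    (u : Fin m → En 2)
    (hu : ∀ j : Fin m, u j = WithLp.toLp 2 (fun i =>
      if i = 0 then Real.cos (2 * π * ((j : ℕ) : ℝ) / m)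
      else Real.sin (2 * π * ((j : ℕ) : ℝ) / m)))
    (μP μB : Measure (En 2))
    (hμP : μP = ∑ j, ENNReal.ofReal (2 * π / m) • Measure.dirac (u j))
    (hμB : μB = Measure.map
      (fun θ : ℝ => (WithLp.toLp 2 (fun i => if i = 0 then Real.cos θ else Real.sin θ) : En 2))
      (volume.restrict (Set.Ico (0 : ℝ) (2 * π)))) :
    ∀ i₁ i₂ : ℕ, i₁ + i₂ ≤ m - 1 →
      ∫ x, (x 0) ^ i₁ * (x 1) ^ i₂ ∂μP = ∫ x, (x 0) ^ i₁ * (x 1) ^ i₂ ∂μB := by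
  intro i₁ i₂ hile
  have hab : i₁ + i₂ < m := by omega
  have hm0 : 0 < m := by omega
  set f : En 2 → ℝ := fun x => (x 0) ^ i₁ * (x 1) ^ i₂ with hf
  have hfc : Continuous f := by
    apply Continuous.mul
    · exact ((continuous_apply (0 : Fin 2)).comp (PiLp.continuous_ofLp 2 _)).pow i₁
    · exact ((continuous_apply (1 : Fin 2)).comp (PiLp.continuous_ofLp 2 _)).pow i₂
  -- LHS
  have hLHS : ∫ x, f x ∂μP = (2*π/m) * ∑ j ∈ Finset.range m,
      (Real.cos (2*π*j/m))^i₁ * (Real.sin (2*π*j/m))^i₂ := by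
    rw [hμP]
    have hdint : ∀ x : En 2, Integrable f (Measure.dirac x) :=
      fun x => ⟨hfc.aestronglyMeasurable, by
        simp [HasFiniteIntegral, lintegral_dirac]⟩
    rw [integral_finset_sum_measure (fun j _ =>
      (hdint (u j)).smul_measure ENNReal.ofReal_ne_top)]
    have hval : ∀ j : Fin m, f (u j) =
        (Real.cos (2*π*((j:ℕ):ℝ)/m))^i₁ * (Real.sin (2*π*((j:ℕ):ℝ)/m))^i₂ := by
      intro j
      rw [hf, hu j]
      norm_num
    have : ∀ j : Fin m, ∫ x, f x ∂(ENNReal.ofReal (2 * π / m) • Measure.dirac (u j))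
        = (2*π/m) * f (u j) := by
      intro j
      rw [integral_smul_measure, integral_dirac, ENNReal.toReal_ofReal (by positivity),
        smul_eq_mul]
    simp only [this, hval]
    rw [← Finset.mul_sum, Fin.sum_univ_eq_sum_range
      (fun j => (Real.cos (2*π*(j:ℝ)/m))^i₁ * (Real.sin (2*π*(j:ℝ)/m))^i₂)]
  -- RHS
  have hgc : Continuous (fun θ : ℝ => (WithLp.toLp 2 (fun i => if i = 0 then Real.cos θ else Real.sin θ) : En 2)) := by
    refine (PiLp.continuous_toLp 2 _).comp ?_
    apply continuous_pi
    intro i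
    by_cases hi : i = 0 <;> simp [hi, Real.continuous_cos, Real.continuous_sin]
  have hRHS : ∫ x, f x ∂μB = ∫ θ in (0:ℝ)..(2*π), (Real.cos θ)^i₁ * (Real.sin θ)^i₂ := by
    have hmap : ∫ x, f x ∂(Measure.map
        (fun θ : ℝ => (WithLp.toLp 2 (fun i => if i = 0 then Real.cos θ else Real.sin θ) : En 2))
        (volume.restrict (Set.Ico (0 : ℝ) (2 * π))))
        = ∫ θ in Set.Ico (0:ℝ) (2*π),
            f ((WithLp.toLp 2 (fun i => if i = 0 then Real.cos θ else Real.sin θ) : En 2)) :=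
      integral_map hgc.aemeasurable hfc.aestronglyMeasurable
    rw [hμB]
    refine hmap.trans ?_
    have : ∀ θ : ℝ, f ((WithLp.toLp 2 (fun i => if i = 0 then Real.cos θ else Real.sin θ) : En 2))
        = (Real.cos θ)^i₁ * (Real.sin θ)^i₂ := by
      intro θ; rw [hf]; norm_num
    simp only [this]
    rw [MeasureTheory.integral_Ico_eq_integral_Ioo,
      ← MeasureTheory.integral_Ioc_eq_integral_Ioo,
      ← intervalIntegral.integral_of_le (by positivity : (0:ℝ) ≤ 2*π)]
  rw [hLHS, hRHS]
  exact keyR m i₁ i₂ hm0 hab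
end
end

section
/- Let μ be a finite Borel measure on S^{n-1} with μ(S^{n-1}) > 0, whose first order moments vanish and whose second moment matrix M(μ) has exactly one positive eigenvalue α and n−1 zero eigenvalues, with unit eigenvector u for the eigenvalue α. Then μ = (α/2)(δ_u + δ_{-u}), hence μ is the surface area measure of any convex body of surface area α/2 contained in a hyperplane orthogonal to u. -/
open MeasureTheory Metric Real Filter
open scoped InnerProductSpace ENNReal NNReal Topology

noncomputable section

/-- `μ` is the surface area measure `S_{n-1}(K, ·)` of the convex body `K`. -/
def IsSurfaceAreaMeasure {n : ℕ} (K : Set (En n)) (μ : Measure (Sph n)) : Prop :=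
  ((interior K).Nonempty ∧ ∀ ω : Set (Sph n), MeasurableSet ω →
      μ ω = μH[((n : ℝ) - 1)]
        {x ∈ frontier K | ∃ u ∈ ω, ∀ y ∈ K, ⟪y - x, (u : En n)⟫_ℝ ≤ 0})
  ∨ (interior K = ∅ ∧ ∃ u u' : Sph n, (u' : En n) = -(u : En n) ∧
      (∃ c : ℝ, ∀ x ∈ K, ⟪x, (u : En n)⟫_ℝ = c) ∧
      μ = (μH[((n : ℝ) - 1)] K) • (Measure.dirac u + Measure.dirac u'))

/-- The matrix of second order moments of a measure on the sphere. -/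
def secondMomentMatrix {n : ℕ} (μ : Measure (Sph n)) : Matrix (Fin n) (Fin n) ℝ :=
  Matrix.of fun i j => ∫ u, (u : En n) i * (u : En n) j ∂μ

-- auxiliary lemmas

lemma cont_coord {n : ℕ} (i : Fin n) : Continuous fun w : Sph n => (w : En n) i :=
  (EuclideanSpace.proj i).continuous.comp continuous_subtype_val

lemma integrable_of_cont {n : ℕ} (μ : Measure (Sph n)) [IsFiniteMeasure μ]
    (f : Sph n → ℝ) (hf : Continuous f) : Integrable f μ :=
  hf.integrable_of_hasCompactSupport (HasCompactSupport.of_compactSpace f)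

/-- key: for z orthogonal to u with M z = 0, a.e. w has ⟪w,z⟫ = 0 -/
lemma ae_inner_zero {n : ℕ} (μ : Measure (Sph n)) [IsFiniteMeasure μ]
    (z : En n)
    (hz : Matrix.mulVec (secondMomentMatrix μ) (fun i => z i) = 0) :
    ∀ᵐ w : Sph n ∂μ, ⟪(w : En n), z⟫_ℝ = 0 := by
  have hint : ∀ i j : Fin n, Integrable (fun w : Sph n => (w : En n) i * (w : En n) j) μ :=
    fun i j => integrable_of_cont μ _ ((cont_coord i).mul (cont_coord j))
  have key : ∫ w, (⟪(w : En n), z⟫_ℝ)^2 ∂μ = 0 := by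
    have h1 : ∀ w : Sph n, (⟪(w : En n), z⟫_ℝ)^2
        = ∑ i, ∑ j, z i * z j * ((w : En n) i * (w : En n) j) := by
      intro w
      have : ⟪(w : En n), z⟫_ℝ = ∑ i, z i * (w : En n) i := by
        simp [PiLp.inner_apply, RCLike.inner_apply, mul_comm]
      rw [this, sq, Finset.sum_mul_sum]
      apply Finset.sum_congr rfl; intro i _
      apply Finset.sum_congr rfl; intro j _
      ring
    calc ∫ w, (⟪(w : En n), z⟫_ℝ)^2 ∂μ
        = ∫ w, ∑ i, ∑ j, z i * z j * ((w : En n) i * (w : En n) j) ∂μ := by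
          simp_rw [h1]
      _ = ∑ i, ∑ j, z i * z j * ∫ w, (w : En n) i * (w : En n) j ∂μ := by
          rw [integral_finset_sum]
          · apply Finset.sum_congr rfl; intro i _
            rw [integral_finset_sum]
            · apply Finset.sum_congr rfl; intro j _
              exact integral_const_mul (z i * z j) _
            · exact fun j _ => ((hint i j).const_mul _)
          · intro i _
            exact integrable_finset_sum _ (fun j _ => (hint i j).const_mul _)
      _ = ∑ i, z i * (Matrix.mulVec (secondMomentMatrix μ) (fun k => z k)) i := by
          apply Finset.sum_congr rfl; intro i _
          rw [Matrix.mulVec, dotProduct, Finset.mul_sum]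
          apply Finset.sum_congr rfl; intro j _
          simp [secondMomentMatrix]
          ring
      _ = 0 := by rw [hz]; simp
  have hnn : ∀ w : Sph n, 0 ≤ (⟪(w : En n), z⟫_ℝ)^2 := fun w => sq_nonneg _
  have hInt : Integrable (fun w : Sph n => (⟪(w : En n), z⟫_ℝ)^2) μ := by
    apply integrable_of_cont
    have : Continuous fun w : Sph n => ⟪(w : En n), z⟫_ℝ :=
      Continuous.inner continuous_subtype_val continuous_const
    exact this.pow 2
  have := (integral_eq_zero_iff_of_nonneg (fun w => hnn w) hInt).mp key
  filter_upwards [this] with w hw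
  exact pow_eq_zero_iff (by norm_num) |>.mp hw

/-- if a finite Borel measure `μ` on `S^{n-1}` with positive total
mass has vanishing first order moments and its second moment matrix has exactly
one positive eigenvalue `α` (with unit eigenvector `u`) and `n-1` zero
eigenvalues (it kills the orthogonal complement of `u`), then
`μ = (α/2)(δ_u + δ_{-u})`; hence `μ` is the surface area measure of every
convex body of `(n-1)`-dimensional surface area `α/2` contained in a hyperplane
orthogonal to `u`. -/
theorem stmt7 {n : ℕ} (hn : 2 ≤ n) (μ : Measure (Sph n)) [IsFiniteMeasure μ]
    (hpos : 0 < μ Set.univ)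
    (hmom1 : ∀ i, ∫ w, (w : En n) i ∂μ = 0)
    (α : ℝ) (hα : 0 < α) (u u' : Sph n) (hu' : (u' : En n) = -(u : En n))
    (heig : Matrix.mulVec (secondMomentMatrix μ) (fun i => (u : En n) i)
      = α • fun i => (u : En n) i)
    (hker : ∀ z : En n, ⟪z, (u : En n)⟫_ℝ = 0 →
      Matrix.mulVec (secondMomentMatrix μ) (fun i => z i) = 0) :
    μ = ENNReal.ofReal (α / 2) • (Measure.dirac u + Measure.dirac u') ∧
    ∀ K : Set (En n), Convex ℝ K → IsCompact K → K.Nonempty →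
      (∃ c : ℝ, ∀ x ∈ K, ⟪x, (u : En n)⟫_ℝ = c) →
      μH[((n : ℝ) - 1)] K = ENNReal.ofReal (α / 2) →
      IsSurfaceAreaMeasure K μ := by
  have hun : ‖(u : En n)‖ = 1 := by
    have := u.2; simpa [mem_sphere_zero_iff_norm] using this
  have hu0 : (u : En n) ≠ 0 := by
    intro h; rw [h] at hun; simp at hun
  -- a.e. w = u or w = u'
  have hsupp : ∀ᵐ w ∂μ, w = u ∨ w = u' := by
    have hz : ∀ k : Fin n, ∀ᵐ w : Sph n ∂μ,
        ⟪(w : En n), EuclideanSpace.single k (1:ℝ) - (u : En n) k • (u : En n)⟫_ℝ = 0 := by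
      intro k
      apply ae_inner_zero
      apply hker
      rw [inner_sub_left, real_inner_smul_left, EuclideanSpace.inner_single_left,
        real_inner_self_eq_norm_sq, hun]
      simp
    have hall : ∀ᵐ w : Sph n ∂μ, ∀ k : Fin n,
        ⟪(w : En n), EuclideanSpace.single k (1:ℝ) - (u : En n) k • (u : En n)⟫_ℝ = 0 :=
      ae_all_iff.mpr hz
    filter_upwards [hall] with w hw
    set t := ⟪(w : En n), (u : En n)⟫_ℝ with ht
    have hinner : ⟪(w : En n), (u : En n)⟫_ℝ = ∑ x, (w : En n) x * (u : En n) x := by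
      simp [PiLp.inner_apply, RCLike.inner_apply, mul_comm]
    have hcoord : ∀ k, (w : En n) k = t * (u : En n) k := by
      intro k
      have h3 := hw k
      rw [inner_sub_right, real_inner_smul_right, EuclideanSpace.inner_single_right] at h3
      simp at h3
      rw [ht, hinner]
      rw [hinner] at h3
      linarith
    have hwe : (w : En n) = t • (u : En n) := by
      ext k; rw [hcoord k]; simp
    have hwn : ‖(w : En n)‖ = 1 := by
      have := w.2; simpa [mem_sphere_zero_iff_norm] using this
    have : |t| = 1 := by
      rw [hwe, norm_smul, hun] at hwn; simpa using hwn
    rcases abs_eq (by norm_num : (0:ℝ) ≤ 1) |>.mp this with h1 | h1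
    · left; apply Subtype.ext; rw [hwe, h1, one_smul]
    · right; apply Subtype.ext; rw [hwe, h1, hu', neg_one_smul]
  have hne : u ≠ u' := by
    intro h
    have h2 := hu'; rw [← h] at h2
    apply hu0
    ext k
    have h3 : (u : En n) k = -((u : En n) k) := by
      have := congrArg (fun v : En n => v k) h2; simpa using this
    have h4 : (u : En n) k = 0 := by linarith
    simpa using h4
  -- measure decomposition
  set a := μ {u} with ha
  set b := μ {u'} with hb
  have hdecomp : μ = a • Measure.dirac u + b • Measure.dirac u' := by
    ext s hs
    have hnull : μ ({u, u'} : Set (Sph n))ᶜ = 0 := by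
      have h0 : μ {w : Sph n | ¬ (w = u ∨ w = u')} = 0 := by
        have := hsupp; rwa [ae_iff] at this
      have hset : ({u, u'} : Set (Sph n))ᶜ = {w : Sph n | ¬ (w = u ∨ w = u')} := by
        ext w; simp
      rw [hset]; exact h0
    have hms : MeasurableSet ({u, u'} : Set (Sph n)) :=
      (measurableSet_singleton u').insert u
    have h1 : μ s = μ (s ∩ {u, u'}) := by
      have := measure_inter_add_diff s hms (μ := μ)
      have h2 : μ (s \ {u, u'}) = 0 :=
        measure_mono_null (Set.diff_subset_compl s _) hnull
      rw [← this, h2, add_zero]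
    rw [h1]
    have hd : (a • Measure.dirac u + b • Measure.dirac u') s
        = a * s.indicator 1 u + b * s.indicator 1 u' := by
      simp [Measure.dirac_apply' _ hs, smul_eq_mul]
    rw [hd]
    by_cases h1 : u ∈ s <;> by_cases h2 : u' ∈ s
    · have : s ∩ {u, u'} = {u, u'} := by
        apply Set.inter_eq_self_of_subset_right
        intro w hw; rcases hw with h | h <;> subst h <;> assumption
      rw [this, Set.indicator_of_mem h1, Set.indicator_of_mem h2]
      have : ({u, u'} : Set (Sph n)) = {u} ∪ {u'} := Set.insert_eq _ _
      rw [this, measure_union (Set.disjoint_singleton.mpr hne) (measurableSet_singleton u')]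
      simp [ha, hb]
    · have : s ∩ {u, u'} = {u} := by
        ext w; constructor
        · rintro ⟨hws, hw⟩
          rcases hw with h | h
          · exact h
          · exfalso; exact h2 (h ▸ hws)
        · rintro rfl; exact ⟨h1, Or.inl rfl⟩
      rw [this, Set.indicator_of_mem h1, Set.indicator_of_notMem h2]
      simp [ha]
    · have : s ∩ {u, u'} = {u'} := by
        ext w; constructor
        · rintro ⟨hws, hw⟩
          rcases hw with h | h
          · exfalso; exact h1 (h ▸ hws)
          · exact h
        · rintro rfl; exact ⟨h2, Or.inr rfl⟩
      rw [this, Set.indicator_of_notMem h1, Set.indicator_of_mem h2]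
      simp [hb]
    · have : s ∩ {u, u'} = ∅ := by
        ext w; simp only [Set.mem_inter_iff, Set.mem_empty_iff_false, iff_false]
        rintro ⟨hws, hw⟩
        rcases hw with h | h
        · exact h1 (h ▸ hws)
        · exact h2 (h ▸ hws)
      rw [this, Set.indicator_of_notMem h1, Set.indicator_of_notMem h2]
      simp
  have haf : a ≠ ⊤ := (measure_lt_top μ _).ne
  have hbf : b ≠ ⊤ := (measure_lt_top μ _).ne
  set a' := a.toReal with ha'
  set b' := b.toReal with hb'
  -- integrals against the decomposed measure
  haveI i1 : IsFiniteMeasure (a • Measure.dirac u) := by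
    constructor
    rw [Measure.smul_apply, smul_eq_mul]
    simpa using haf.lt_top
  haveI i2 : IsFiniteMeasure (b • Measure.dirac u') := by
    constructor
    rw [Measure.smul_apply, smul_eq_mul]
    simpa using hbf.lt_top
  have hint_eq : ∀ f : Sph n → ℝ, Continuous f →
      ∫ w, f w ∂μ = a' * f u + b' * f u' := by
    intro f hf
    rw [hdecomp]
    rw [integral_add_measure]
    · rw [integral_smul_measure, integral_smul_measure, integral_dirac, integral_dirac]
      simp [smul_eq_mul, ha', hb']
    · exact integrable_of_cont _ f hf
    · exact integrable_of_cont _ f hf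
  -- first moments: a' = b'
  have hab : a' = b' := by
    have hex : ∃ i, (u : En n) i ≠ 0 := by
      by_contra h
      push_neg at h
      exact hu0 (by ext k; simpa using h k)
    obtain ⟨i, hi⟩ := hex
    have := hmom1 i
    rw [hint_eq _ (cont_coord i)] at this
    have hu'i : (u' : En n) i = -((u : En n) i) := by rw [hu']; simp
    rw [hu'i] at this
    have : (a' - b') * (u : En n) i = 0 := by linear_combination this
    rcases mul_eq_zero.mp this with h | h
    · linarith [sub_eq_zero.mp h]
    · exact absurd h hi
  -- second moments: a' + b' = α
  have hsum : a' + b' = α := by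
    have hex : ∃ i, (u : En n) i ≠ 0 := by
      by_contra h; push_neg at h; exact hu0 (by ext k; simpa using h k)
    obtain ⟨i, hi⟩ := hex
    have h1 : ∑ j, ((u : En n) j)^2 = 1 := by
      have := hun
      rw [EuclideanSpace.norm_eq] at this
      have h2 : ∑ j, ((u : En n) j)^2 = 1^2 := by
        rw [← this, Real.sq_sqrt]
        · apply Finset.sum_congr rfl; intro j _; simp [Real.norm_eq_abs, sq_abs]
        · positivity
      simpa using h2
    have heigi := congrFun heig i
    have hmv : Matrix.mulVec (secondMomentMatrix μ) (fun k => (u : En n) k) i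
        = (a' + b') * (u : En n) i := by
      rw [Matrix.mulVec, dotProduct]
      have : ∀ j, secondMomentMatrix μ i j * (u : En n) j
          = (a' + b') * ((u : En n) i * ((u : En n) j)^2) := by
        intro j
        have : secondMomentMatrix μ i j = (a' + b') * ((u : En n) i * (u : En n) j) := by
          show (∫ w, (w : En n) i * (w : En n) j ∂μ) = _
          rw [hint_eq (fun w => (w : En n) i * (w : En n) j) ((cont_coord i).mul (cont_coord j))]
          rw [hu']
          simp
          ring
        rw [this]; ring
      rw [Finset.sum_congr rfl (fun j _ => this j), ← Finset.mul_sum, ← Finset.mul_sum, h1]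
      ring
    rw [hmv] at heigi
    have : ((a' + b') - α) * (u : En n) i = 0 := by
      have : (α • fun k => (u : En n) k) i = α * (u : En n) i := by simp
      rw [this] at heigi; linarith
    rcases mul_eq_zero.mp this with h | h
    · linarith [sub_eq_zero.mp h]
    · exact absurd h hi
  have hval : a' = α / 2 := by linarith
  have haval : a = ENNReal.ofReal (α / 2) := by
    rw [← hval, ha', ENNReal.ofReal_toReal haf]
  have hbval : b = ENNReal.ofReal (α / 2) := by
    have : b' = α / 2 := by linarith
    rw [← this, hb', ENNReal.ofReal_toReal hbf]
  have hmain : μ = ENNReal.ofReal (α / 2) • (Measure.dirac u + Measure.dirac u') := by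
    rw [hdecomp, haval, hbval, smul_add]
  refine ⟨hmain, ?_⟩
  intro K hconv hcomp hne' ⟨c, hc⟩ hmeas
  right
  constructor
  · -- interior K = ∅
    by_contra h
    rw [← Set.not_nonempty_iff_eq_empty] at h
    push_neg at h
    obtain ⟨x, hx⟩ := h
    obtain ⟨ε, hε, hball⟩ := Metric.isOpen_iff.mp isOpen_interior x hx
    have hxK : x ∈ K := interior_subset hx
    have hyK : x + (ε/2) • (u : En n) ∈ K := by
      apply interior_subset; apply hball
      rw [Metric.mem_ball, dist_eq_norm]
      simp only [add_sub_cancel_left]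
      rw [norm_smul, hun, mul_one, Real.norm_eq_abs, abs_of_pos (by linarith : (0:ℝ) < ε/2)]
      linarith
    have h1 := hc x hxK
    have h2 := hc _ hyK
    rw [inner_add_left, real_inner_smul_left, real_inner_self_eq_norm_sq, hun, h1] at h2
    norm_num at h2
    linarith
  · exact ⟨u, u', hu', ⟨c, hc⟩, by rw [hmeas]; exact hmain⟩
end
end
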